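/- Let d be a positive integer, c > 0 and L > 0 real numbers, and Λ a full-rank ℤ-lattice in ℝ^{2d}. For any real r ≥ 1, the series ∑' |n|^d · L · C(j+d-1, d-1) · (2c/(π|n|(d + 2j - d·sgn(n))))^r + ∑_{ξ ∈ Λ \ {0}} (2/π)^r · 1/‖ξ‖^{2r} converges if and only if r > d + 1, where the primed double sum ranges over pairs (n, j) with n a nonzero integer and j ≥ 0 an integer, excluding the pairs with j = 0 and n > 0. (This is the Schatten norm characterization for the Green operator G_α in the boundary case α = d; the case α = -d is identical with the exclusion j = 0, n < 0.) -/

import Mathlib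

open Real

lemma my_summable_sum_elim_iff {α β : Type*} {f : α → ℝ} {g : β → ℝ} :
    Summable (Sum.elim f g) ↔ Summable f ∧ Summable g := by
  constructor
  · intro h
    exact ⟨h.comp_injective Sum.inl_injective, h.comp_injective Sum.inr_injective⟩
  · rintro ⟨hf, hg⟩
    have h1 : Summable (Sum.elim f (0 : β → ℝ)) := by
      rw [← Function.Injective.summable_iff Sum.inl_injective]
      · exact hf
      · rintro (x | x) hx
        · exact absurd ⟨x, rfl⟩ hx
        · rfl
    have h2 : Summable (Sum.elim (0 : α → ℝ) g) := by
      rw [← Function.Injective.summable_iff Sum.inr_injective]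
      · exact hg
      · rintro (x | x) hx
        · rfl
        · exact absurd ⟨x, rfl⟩ hx
    have : Sum.elim f g = fun x => Sum.elim f (0 : β → ℝ) x + Sum.elim (0 : α → ℝ) g x := by
      funext x; cases x <;> simp
    rw [this]
    exact h1.add h2

lemma my_summable_pi_fin (m : ℕ) {f : ℤ → ℝ} (hf0 : ∀ t, 0 ≤ f t) (hf : Summable f) :
    Summable (fun v : Fin m → ℤ => ∏ i, f (v i)) := by
  induction m with
  | zero => exact Summable.of_finite
  | succ m ih =>
    have h : Summable (fun p : ℤ × (Fin m → ℤ) => f p.1 * ∏ i, f (p.2 i)) :=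
      Summable.mul_of_nonneg (f := f) (g := fun v : Fin m → ℤ => ∏ i, f (v i)) hf ih hf0
        (fun v => Finset.prod_nonneg fun i _ => hf0 _)
    rw [← (Fin.consEquiv (fun _ : Fin (m + 1) => ℤ)).summable_iff]
    refine h.congr fun p => ?_
    simp [Fin.consEquiv, Function.comp, Fin.prod_univ_succ]

lemma my_summable_pi {ι : Type*} [Fintype ι] {f : ℤ → ℝ} (hf0 : ∀ t, 0 ≤ f t)
    (hf : Summable f) : Summable (fun v : ι → ℤ => ∏ i, f (v i)) := by
  let e := Fintype.equivFin ι
  rw [← (Equiv.arrowCongr e.symm (Equiv.refl ℤ)).summable_iff]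
  refine (my_summable_pi_fin (Fintype.card ι) hf0 hf).congr fun w => ?_
  simp only [Equiv.arrowCongr, Equiv.refl, Equiv.coe_fn_mk, Function.comp]
  exact (Equiv.prod_comp e (fun k => f (w k))).symm

lemma my_summable_intmax {q : ℝ} (hq : 1 < q) :
    Summable (fun t : ℤ => (max |(t : ℝ)| 1) ^ (-q)) := by
  have h1 := Real.summable_abs_int_rpow hq
  have h2 : Summable (fun t : ℤ => if t = 0 then (1 : ℝ) else 0) := by
    apply summable_of_ne_finset_zero (s := {0})
    intro t ht
    simp only [Finset.mem_singleton] at ht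
    simp [ht]
  refine (h1.add h2).congr fun t => ?_
  rcases eq_or_ne t 0 with rfl | ht
  · simp [Real.zero_rpow (by linarith : -q ≠ 0)]
  · have h1 : (1 : ℝ) ≤ |(t : ℝ)| := by
      rw [← Int.cast_abs]
      exact_mod_cast Int.one_le_abs ht
    simp [ht, max_eq_left h1]

set_option maxHeartbeats 1000000 in
lemma my_lattice_summable (d : ℕ) (hd : 0 < d)
    (Λ : AddSubgroup (EuclideanSpace ℝ (Fin (2 * d)))) (hdisc : DiscreteTopology Λ)
    (hspan : Submodule.span ℝ (Λ : Set (EuclideanSpace ℝ (Fin (2 * d)))) = ⊤)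
    (r : ℝ) (hr : (d : ℝ) < r) :
    Summable (fun ξ : {x : Λ // x ≠ 0} =>
      1 / ‖((ξ : Λ) : EuclideanSpace ℝ (Fin (2 * d)))‖ ^ (2 * r)) := by
  set E := EuclideanSpace ℝ (Fin (2 * d))
  set L : Submodule ℤ E := AddSubgroup.toIntSubmodule Λ with hL
  haveI : DiscreteTopology L := hdisc
  haveI : IsZLattice ℝ L := ⟨by rwa [AddSubgroup.coe_toIntSubmodule]⟩
  haveI := ZLattice.module_free ℝ L
  haveI := ZLattice.module_finite ℝ L
  let b := Module.Free.chooseBasis ℤ L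
  set ι := Module.Free.ChooseBasisIndex ℤ L
  have hcard : Fintype.card ι = 2 * d := by
    rw [← Module.finrank_eq_card_chooseBasisIndex, ZLattice.rank ℝ L]
    simp [E]
  set B := Module.Basis.ofZLatticeBasis ℝ L b with hB
  let Tc : E →L[ℝ] (ι → ℝ) := LinearMap.toContinuousLinearMap B.equivFun.toLinearMap
  set C : ℝ := ‖Tc‖ + 1 with hC
  have hC1 : (1 : ℝ) ≤ C := by have := norm_nonneg Tc; simp only [hC]; linarith
  have hC0 : (0 : ℝ) < C := by linarith
  have hCle : ∀ x : E, ‖Tc x‖ ≤ C * ‖x‖ := fun x =>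
    (Tc.le_opNorm x).trans (by nlinarith [norm_nonneg x, norm_nonneg Tc])
  set q : ℝ := (2 * r) / (2 * d) with hq
  have hd0 : (0 : ℝ) < 2 * d := by positivity
  have hq1 : 1 < q := by
    rw [hq, lt_div_iff₀ hd0]
    linarith
  have hq0 : 0 < q := by linarith
  set f : ℤ → ℝ := fun t => (max |(t : ℝ)| 1) ^ (-q) with hf
  have hf0 : ∀ t, 0 ≤ f t := fun t => Real.rpow_nonneg (le_trans zero_le_one (le_max_right _ _)) _
  have hfs : Summable f := my_summable_intmax hq1
  have hg : Summable (fun v : ι → ℤ => C ^ (2 * r) * ∏ i, f (v i)) :=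
    (my_summable_pi hf0 hfs).mul_left _
  -- the map from nonzero lattice points to integer coordinates
  let ψ : {x : Λ // x ≠ 0} → L := fun x =>
    ⟨((x : Λ) : E), (x : Λ).2⟩
  let φ : {x : Λ // x ≠ 0} → (ι → ℤ) := fun x i => b.repr (ψ x) i
  have hψ0 : ∀ x : {x : Λ // x ≠ 0}, ψ x ≠ 0 := by
    intro x hx0
    have : ((x : Λ) : E) = 0 := congrArg Subtype.val hx0
    exact x.2 (Subtype.ext this)
  have hφ : Function.Injective φ := by
    intro x y hxy
    have h1 : b.repr (ψ x) = b.repr (ψ y) := DFunLike.ext _ _ fun i => congrFun hxy i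
    have h2 : ψ x = ψ y := b.repr.injective h1
    have h3 : ((x : Λ) : E) = ((y : Λ) : E) := congrArg Subtype.val h2
    exact Subtype.ext (Subtype.ext h3)
  refine Summable.of_nonneg_of_le (fun x => by positivity) ?_ (hg.comp_injective hφ)
  intro x
  set v : ι → ℤ := φ x with hv
  set M : ℝ := ‖(B.equivFun ((x : Λ) : E))‖ with hM
  have hcoord : ∀ i, (B.equivFun ((x : Λ) : E)) i = ((v i : ℤ) : ℝ) := by
    intro i
    rw [B.equivFun_apply, hB, show ((x : Λ) : E) = ((ψ x : L) : E) from rfl,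
      Module.Basis.ofZLatticeBasis_repr_apply]
  have key1 : ∀ i, |(v i : ℝ)| ≤ M := by
    intro i
    rw [← hcoord i]
    exact (norm_le_pi_norm (B.equivFun ((x : Λ) : E)) i).trans_eq rfl
  have key2 : (1 : ℝ) ≤ M := by
    have : b.repr (ψ x) ≠ 0 := fun h => hψ0 x (b.repr.map_eq_zero_iff.mp h)
    obtain ⟨i, hi⟩ := Finsupp.ne_iff.mp this
    have h1 : (1 : ℝ) ≤ |(v i : ℝ)| := by
      rw [← Int.cast_abs]
      exact_mod_cast Int.one_le_abs hi
    exact h1.trans (key1 i)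
  have key3 : M ≤ C * ‖((x : Λ) : E)‖ := hCle _
  have hnx : 0 < ‖((x : Λ) : E)‖ := by
    rcases (norm_nonneg ((x : Λ) : E)).lt_or_eq with h | h
    · exact h
    · exfalso; nlinarith
  have hMC : M / C ≤ ‖((x : Λ) : E)‖ := by
    rw [div_le_iff₀ hC0]
    nlinarith
  have hMC0 : 0 < M / C := div_pos (by linarith) hC0
  -- product bound
  have hprod_le : ∏ i, max |(v i : ℝ)| 1 ≤ M ^ (2 * d) := by
    have h0 : ∏ i, max |(v i : ℝ)| 1 ≤ ∏ _i : ι, M :=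
      Finset.prod_le_prod (fun i _ => le_trans zero_le_one (le_max_right _ _))
        (fun i _ => max_le (key1 i) key2)
    refine h0.trans ?_
    rw [Finset.prod_const, Finset.card_univ, hcard]
  have hprod_pos : 0 < ∏ i, max |(v i : ℝ)| 1 :=
    Finset.prod_pos fun i _ => lt_of_lt_of_le zero_lt_one (le_max_right _ _)
  have hMpow : (M ^ (2 * d) : ℝ) = M ^ ((2 * d : ℕ) : ℝ) := (Real.rpow_natCast M (2 * d)).symm
  have hstep : M ^ (-(2 * r)) ≤ ∏ i, f (v i) := by
    have h1 : ∏ i, f (v i) = (∏ i, max |(v i : ℝ)| 1) ^ (-q) :=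
      Real.finset_prod_rpow _ _ (fun i _ => le_trans zero_le_one (le_max_right _ _)) _
    rw [h1]
    have h2 : (M ^ (2 * d) : ℝ) ^ (-q) ≤ (∏ i, max |(v i : ℝ)| 1) ^ (-q) :=
      Real.rpow_le_rpow_of_nonpos hprod_pos hprod_le (by linarith)
    refine le_trans (le_of_eq ?_) h2
    rw [hMpow, ← Real.rpow_mul (by linarith : (0:ℝ) ≤ M)]
    congr 1
    rw [hq]
    push_cast
    field_simp
  calc 1 / ‖((x : Λ) : E)‖ ^ (2 * r) ≤ 1 / (M / C) ^ (2 * r) := by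
        apply one_div_le_one_div_of_le (Real.rpow_pos_of_pos hMC0 _)
        exact Real.rpow_le_rpow (le_of_lt hMC0) hMC
          (by have : (0:ℝ) ≤ d := Nat.cast_nonneg d; linarith)
    _ = C ^ (2 * r) * M ^ (-(2 * r)) := by
        rw [Real.div_rpow (by linarith : (0:ℝ) ≤ M) (le_of_lt hC0), one_div_div,
          Real.rpow_neg (by linarith : (0:ℝ) ≤ M), div_eq_mul_inv]
    _ ≤ C ^ (2 * r) * ∏ i, f (v i) := by
        exact mul_le_mul_of_nonneg_left hstep (le_of_lt (Real.rpow_pos_of_pos hC0 _))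


lemma my_part1_forward (d : ℕ) (hd : 0 < d) (c L : ℝ) (hc : 0 < c) (hL : 0 < L)
    (r : ℝ) (hr : 1 ≤ r)
    (h : Summable (fun p : {q : ℤ × ℕ // q.1 ≠ 0 ∧ ¬(q.2 = 0 ∧ 0 < q.1)} =>
      |((p : ℤ × ℕ).1 : ℝ)| ^ d * L * (((p : ℤ × ℕ).2 + d - 1).choose (d - 1) : ℝ) *
        (2 * c / (π * |((p : ℤ × ℕ).1 : ℝ)| *
          ((d : ℝ) + 2 * (p : ℤ × ℕ).2 - (d : ℝ) * (((p : ℤ × ℕ).1.sign : ℤ) : ℝ)))) ^ r)) :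
    r > d + 1 := by
  have hπ := Real.pi_pos
  let e : ℕ → {q : ℤ × ℕ // q.1 ≠ 0 ∧ ¬(q.2 = 0 ∧ 0 < q.1)} := fun m =>
    ⟨(-(m + 1 : ℤ), 0), by constructor <;> omega⟩
  have he : Function.Injective e := by
    intro a b hab
    have h1 := congrArg (fun p : {q : ℤ × ℕ // q.1 ≠ 0 ∧ ¬(q.2 = 0 ∧ 0 < q.1)} =>
      (p : ℤ × ℕ).1) hab
    simp only [e] at h1
    omega
  have hsum := h.comp_injective he
  set K := L * (c / (π * d)) ^ r with hK
  have hKpos : 0 < K := by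
    apply mul_pos hL
    apply Real.rpow_pos_of_pos
    apply div_pos hc
    apply mul_pos hπ
    exact_mod_cast hd
  have hterm : ∀ m : ℕ,
      ((fun p : {q : ℤ × ℕ // q.1 ≠ 0 ∧ ¬(q.2 = 0 ∧ 0 < q.1)} =>
      |((p : ℤ × ℕ).1 : ℝ)| ^ d * L * (((p : ℤ × ℕ).2 + d - 1).choose (d - 1) : ℝ) *
        (2 * c / (π * |((p : ℤ × ℕ).1 : ℝ)| *
          ((d : ℝ) + 2 * (p : ℤ × ℕ).2 - (d : ℝ) * (((p : ℤ × ℕ).1.sign : ℤ) : ℝ)))) ^ r) ∘ e) m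
      = K * ((m : ℝ) + 1) ^ ((d : ℝ) - r) := by
    intro m
    have hm1 : (0 : ℝ) < (m : ℝ) + 1 := by positivity
    simp only [Function.comp_apply, e]
    have hsign : ((- (m + 1 : ℤ)).sign : ℤ) = -1 := by
      rw [Int.sign_eq_neg_one_iff_neg]
      omega
    have habs : |((-(m + 1 : ℤ) : ℤ) : ℝ)| = (m : ℝ) + 1 := by
      push_cast
      rw [abs_of_nonpos (by linarith)]
      ring
    rw [hsign, habs]
    have hch : ((0 + d - 1).choose (d - 1) : ℝ) = 1 := by
      rw [Nat.zero_add, Nat.choose_self]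
      norm_num
    rw [hch]
    have hden : (d : ℝ) + 2 * (0 : ℕ) - (d : ℝ) * ((-1 : ℤ) : ℝ) = 2 * d := by
      push_cast; ring
    rw [hden]
    have hdpos : (0 : ℝ) < (d : ℝ) := by exact_mod_cast hd
    have hfrac : 2 * c / (π * ((m : ℝ) + 1) * (2 * d)) = (c / (π * d)) * ((m : ℝ) + 1)⁻¹ := by
      field_simp
    rw [hfrac, Real.mul_rpow (by positivity) (by positivity),
      Real.inv_rpow (by positivity), ← Real.rpow_neg hm1.le,
      ← Real.rpow_natCast ((m : ℝ) + 1) d]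
    rw [hK, sub_eq_add_neg, Real.rpow_add hm1]
    ring
  have h2 : Summable (fun m : ℕ => K * ((m : ℝ) + 1) ^ ((d : ℝ) - r)) :=
    hsum.congr hterm
  have h3 : Summable (fun m : ℕ => ((m : ℝ) + 1) ^ ((d : ℝ) - r)) :=
    (summable_mul_left_iff hKpos.ne').mp h2
  have h4 : Summable (fun m : ℕ => ((m + 1 : ℕ) : ℝ) ^ ((d : ℝ) - r)) := by
    refine h3.congr fun m => ?_
    push_cast
    ring_nf
  have h5 : Summable (fun n : ℕ => (n : ℝ) ^ ((d : ℝ) - r)) :=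
    (summable_nat_add_iff 1).mp h4
  have h6 : (d : ℝ) - r < -1 := Real.summable_nat_rpow.mp h5
  linarith

set_option maxHeartbeats 1000000 in
lemma my_part1_backward (d : ℕ) (hd : 0 < d) (c L : ℝ) (hc : 0 < c) (hL : 0 < L)
    (r : ℝ) (hr2 : r > d + 1) :
    Summable (fun p : {q : ℤ × ℕ // q.1 ≠ 0 ∧ ¬(q.2 = 0 ∧ 0 < q.1)} =>
      |((p : ℤ × ℕ).1 : ℝ)| ^ d * L * (((p : ℤ × ℕ).2 + d - 1).choose (d - 1) : ℝ) *
        (2 * c / (π * |((p : ℤ × ℕ).1 : ℝ)| *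
          ((d : ℝ) + 2 * (p : ℤ × ℕ).2 - (d : ℝ) * (((p : ℤ × ℕ).1.sign : ℤ) : ℝ)))) ^ r) := by
  have hπ := Real.pi_pos
  have hd1 : (1 : ℝ) ≤ d := by exact_mod_cast hd
  have hr0 : 0 ≤ r := by linarith
  have hg : Summable (fun n : ℤ => |(n : ℝ)| ^ ((d : ℝ) - r)) := by
    have h1 : (1 : ℝ) < r - d := by linarith
    have := Real.summable_abs_int_rpow h1
    refine this.congr fun n => ?_
    rw [neg_sub]
  have hh : Summable (fun j : ℕ => ((j + d - 1).choose (d - 1) : ℝ) * ((j : ℝ) + 1) ^ (-r)) := by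
    have hmaj : Summable (fun j : ℕ =>
        ((d : ℝ) ^ (d - 1)) * (((j : ℕ) + 1 : ℕ) : ℝ) ^ (((d - 1 : ℕ) : ℝ) - r)) := by
      apply Summable.mul_left
      have hle : ((d - 1 : ℕ) : ℝ) ≤ (d : ℝ) - 1 := by
        rcases d with _ | d'
        · omega
        · push_cast; ring_nf; rfl
      have hlt : ((d - 1 : ℕ) : ℝ) - r < -1 := by linarith
      exact (summable_nat_add_iff (f := fun n : ℕ => (n : ℝ) ^ (((d - 1 : ℕ) : ℝ) - r)) 1).mpr
        (Real.summable_nat_rpow.mpr hlt)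
    refine Summable.of_nonneg_of_le (fun j => by positivity) (fun j => ?_) hmaj
    have hj1 : (0 : ℝ) < (j : ℝ) + 1 := by positivity
    have hch : ((j + d - 1).choose (d - 1) : ℝ) ≤ (d : ℝ) ^ (d - 1) * ((j : ℝ) + 1) ^ (d - 1) := by
      calc ((j + d - 1).choose (d - 1) : ℝ) ≤ ((j + d - 1 : ℕ) : ℝ) ^ (d - 1) := by
            exact_mod_cast Nat.choose_le_pow (j + d - 1) (d - 1)
        _ ≤ ((d : ℝ) * ((j : ℝ) + 1)) ^ (d - 1) := by
            apply pow_le_pow_left₀ (by positivity)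
            push_cast
            have h1 : ((j + d - 1 : ℕ) : ℝ) ≤ (j : ℝ) + d := by
              have : j + d - 1 ≤ j + d := by omega
              exact_mod_cast this
            nlinarith [Nat.cast_nonneg (α := ℝ) j]
        _ = (d : ℝ) ^ (d - 1) * ((j : ℝ) + 1) ^ (d - 1) := mul_pow _ _ _
    calc ((j + d - 1).choose (d - 1) : ℝ) * ((j : ℝ) + 1) ^ (-r)
        ≤ ((d : ℝ) ^ (d - 1) * ((j : ℝ) + 1) ^ (d - 1)) * ((j : ℝ) + 1) ^ (-r) := by
          apply mul_le_mul_of_nonneg_right hch (Real.rpow_nonneg hj1.le _)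
      _ = (d : ℝ) ^ (d - 1) * (((j : ℕ) + 1 : ℕ) : ℝ) ^ (((d - 1 : ℕ) : ℝ) - r) := by
          push_cast
          rw [mul_assoc, ← Real.rpow_natCast ((j : ℝ) + 1) (d - 1),
            ← Real.rpow_add hj1, sub_eq_add_neg]
  have hprod : Summable (fun p : ℤ × ℕ => (|(p.1 : ℝ)| ^ ((d : ℝ) - r)) *
      (((p.2 + d - 1).choose (d - 1) : ℝ) * ((p.2 : ℝ) + 1) ^ (-r))) :=
    Summable.mul_of_nonneg (f := fun n : ℤ => |(n : ℝ)| ^ ((d : ℝ) - r))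
      (g := fun j : ℕ => ((j + d - 1).choose (d - 1) : ℝ) * ((j : ℝ) + 1) ^ (-r)) hg hh
      (fun n => Real.rpow_nonneg (abs_nonneg _) _)
      (fun j => by positivity)
  have hK : Summable (fun p : ℤ × ℕ => (L * (2 * c / π) ^ r) * ((|(p.1 : ℝ)| ^ ((d : ℝ) - r)) *
      (((p.2 + d - 1).choose (d - 1) : ℝ) * ((p.2 : ℝ) + 1) ^ (-r)))) := hprod.mul_left _
  have hsub := hK.comp_injective
    (Subtype.val_injective : Function.Injective
      (Subtype.val : {q : ℤ × ℕ // q.1 ≠ 0 ∧ ¬(q.2 = 0 ∧ 0 < q.1)} → ℤ × ℕ))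
  have hfacts : ∀ p : {q : ℤ × ℕ // q.1 ≠ 0 ∧ ¬(q.2 = 0 ∧ 0 < q.1)},
      (1 : ℝ) ≤ |((p : ℤ × ℕ).1 : ℝ)| ∧ ((p : ℤ × ℕ).2 : ℝ) + 1 ≤
        (d : ℝ) + 2 * (p : ℤ × ℕ).2 - (d : ℝ) * (((p : ℤ × ℕ).1.sign : ℤ) : ℝ) := by
    rintro ⟨⟨n, j⟩, hn, hnj⟩
    constructor
    · rw [← Int.cast_abs]
      exact_mod_cast Int.one_le_abs hn
    · rcases lt_trichotomy n 0 with hneg | hzero | hpos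
      · have hs : ((n.sign : ℤ) : ℝ) = -1 := by
          rw [Int.sign_eq_neg_one_iff_neg.mpr hneg]; norm_num
        simp only [hs]
        push_cast
        nlinarith [Nat.cast_nonneg (α := ℝ) j, hd1]
      · exact absurd hzero hn
      · have hj : 1 ≤ j := by
          rcases Nat.eq_zero_or_pos j with h0 | h1
          · exact absurd ⟨h0, hpos⟩ hnj
          · exact h1
        have hs : ((n.sign : ℤ) : ℝ) = 1 := by
          rw [Int.sign_eq_one_iff_pos.mpr hpos]; norm_num
        simp only [hs]
        have : (1 : ℝ) ≤ (j : ℝ) := by exact_mod_cast hj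
        nlinarith [hd1]
  refine Summable.of_nonneg_of_le (fun p => ?_) (fun p => ?_) hsub
  · obtain ⟨h1, h2⟩ := hfacts p
    have hD0 : (0 : ℝ) < (d : ℝ) + 2 * (p : ℤ × ℕ).2 -
        (d : ℝ) * (((p : ℤ × ℕ).1.sign : ℤ) : ℝ) := by
      have : (0 : ℝ) ≤ ((p : ℤ × ℕ).2 : ℝ) := Nat.cast_nonneg _
      linarith
    have habs0 : (0 : ℝ) < |((p : ℤ × ℕ).1 : ℝ)| := by linarith
    positivity
  · obtain ⟨habs1, hDge⟩ := hfacts p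
    obtain ⟨⟨n, j⟩, hn, hnj⟩ := p
    simp only [Function.comp_apply] at *
    have habs0 : (0 : ℝ) < |(n : ℝ)| := by linarith
    have hj1 : (0 : ℝ) < (j : ℝ) + 1 := by positivity
    set D : ℝ := (d : ℝ) + 2 * j - (d : ℝ) * ((n.sign : ℤ) : ℝ) with hD
    have hD0 : (0 : ℝ) < D := by linarith
    have hX0 : (0 : ℝ) ≤ 2 * c / (π * |(n : ℝ)| * D) := by positivity
    have hXle : 2 * c / (π * |(n : ℝ)| * D) ≤ (2 * c / π) * (|(n : ℝ)|⁻¹ * ((j : ℝ) + 1)⁻¹) := by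
      rw [div_le_iff₀ (by positivity)]
      have h1 : 2 * c / π * (|(n : ℝ)|⁻¹ * ((j : ℝ) + 1)⁻¹) * (π * |(n : ℝ)| * D)
          = (2 * c) * (D / ((j : ℝ) + 1)) := by
        field_simp
      rw [h1]
      have h2 : (1 : ℝ) ≤ D / ((j : ℝ) + 1) := (one_le_div hj1).mpr hDge
      nlinarith
    have hXr : (2 * c / (π * |(n : ℝ)| * D)) ^ r
        ≤ (2 * c / π) ^ r * (|(n : ℝ)| ^ (-r) * ((j : ℝ) + 1) ^ (-r)) := by
      calc (2 * c / (π * |(n : ℝ)| * D)) ^ r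
          ≤ ((2 * c / π) * (|(n : ℝ)|⁻¹ * ((j : ℝ) + 1)⁻¹)) ^ r :=
            Real.rpow_le_rpow hX0 hXle hr0
        _ = (2 * c / π) ^ r * (|(n : ℝ)| ^ (-r) * ((j : ℝ) + 1) ^ (-r)) := by
            rw [Real.mul_rpow (by positivity) (by positivity),
              Real.mul_rpow (by positivity) (by positivity),
              Real.inv_rpow habs0.le, Real.inv_rpow hj1.le,
              ← Real.rpow_neg habs0.le, ← Real.rpow_neg hj1.le]
    calc |(n : ℝ)| ^ d * L * ((j + d - 1).choose (d - 1) : ℝ) *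
          (2 * c / (π * |(n : ℝ)| * D)) ^ r
        ≤ |(n : ℝ)| ^ d * L * ((j + d - 1).choose (d - 1) : ℝ) *
          ((2 * c / π) ^ r * (|(n : ℝ)| ^ (-r) * ((j : ℝ) + 1) ^ (-r))) := by
          apply mul_le_mul_of_nonneg_left hXr (by positivity)
      _ = (L * (2 * c / π) ^ r) * ((|(n : ℝ)| ^ ((d : ℝ) - r)) *
          (((j + d - 1).choose (d - 1) : ℝ) * ((j : ℝ) + 1) ^ (-r))) := by
          rw [show |(n : ℝ)| ^ ((d : ℝ) - r) = |(n : ℝ)| ^ (d : ℝ) * |(n : ℝ)| ^ (-r) by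
            rw [← Real.rpow_add habs0, sub_eq_add_neg]]
          rw [Real.rpow_natCast]
          ring

/-- Schatten norm characterization for the Green operator in the boundary case `α = d`:
the index set excludes the pairs `(n, j)` with `j = 0` and `n > 0`, which correspond to
the zero eigenvalues of `L_d`. The series converges iff `r > d + 1`. -/
theorem schatten_green_boundary_summable_iff (d : ℕ) (hd : 0 < d) (c L : ℝ)
    (hc : 0 < c) (hL : 0 < L)
    (Λ : AddSubgroup (EuclideanSpace ℝ (Fin (2 * d))))
    (hdisc : DiscreteTopology Λ)
    (hspan : Submodule.span ℝ (Λ : Set (EuclideanSpace ℝ (Fin (2 * d)))) = ⊤)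
    (r : ℝ) (hr : 1 ≤ r) :
    Summable (Sum.elim
      (fun p : {q : ℤ × ℕ // q.1 ≠ 0 ∧ ¬(q.2 = 0 ∧ 0 < q.1)} =>
        |((p : ℤ × ℕ).1 : ℝ)| ^ d * L * (((p : ℤ × ℕ).2 + d - 1).choose (d - 1) : ℝ) *
          (2 * c / (π * |((p : ℤ × ℕ).1 : ℝ)| *
            ((d : ℝ) + 2 * (p : ℤ × ℕ).2 - (d : ℝ) * (((p : ℤ × ℕ).1.sign : ℤ) : ℝ)))) ^ r)
      (fun ξ : {x : Λ // x ≠ 0} =>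
        (2 / π) ^ r * (1 / ‖((ξ : Λ) : EuclideanSpace ℝ (Fin (2 * d)))‖ ^ (2 * r)))) ↔
      r > d + 1 := by
  rw [my_summable_sum_elim_iff]
  constructor
  · rintro ⟨h1, _⟩
    exact my_part1_forward d hd c L hc hL r hr h1
  · intro h
    refine ⟨my_part1_backward d hd c L hc hL r h, ?_⟩
    have hdr : (d : ℝ) < r := by
      have : (0 : ℝ) ≤ d := Nat.cast_nonneg d
      linarith
    exact (my_lattice_summable d hd Λ hdisc hspan r hdr).mul_left _
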